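/- Let 0 ≤ a < b, let α ∈ [0,1], m ∈ (0,1], s ∈ (0,1], let p > 1 and q = p/(p−1), and let f : ℝ → ℝ be differentiable on an open interval containing [a, b/m] with f' integrable on [a, b]. If |f'|^q is s-(α,m)-convex, i.e. for all x, y ∈ [a, b] and t ∈ [0,1], |f'(t·x + (1−t)·y)|^q ≤ t^{αs} |f'(x)|^q + m (1 − t^{αs}) |f'(y/m)|^q, then |(f(a)+f(b))/2 − (1/(b−a)) ∫_a^b f(x) dx| ≤ (b−a) · ( 2 / ((p+1)(p+2)) )^{1/p} · ( ( |f'(a)|^q + m·αs·|f'(b/m)|^q ) / (αs + 1) )^{1/q}. -/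

import Mathlib

open MeasureTheory

section Aux
open intervalIntegral Real

lemma myintc (a b r : ℝ) (hab : a < b) (hr : 0 ≤ r) :
    ∫ x in a..b, ((b - x) / (b - a)) ^ r = (b - a) / (r + 1) := by
  have h := intervalIntegral.integral_comp_sub_left (a := a) (b := b)
    (fun y => (y / (b - a)) ^ r) b
  simp only [sub_self] at h
  rw [h]
  rw [intervalIntegral.integral_comp_div (f := fun y => y ^ r) (by linarith : b - a ≠ 0)]
  rw [zero_div, div_self (by linarith : b - a ≠ 0), integral_rpow (Or.inl (by linarith))]
  rw [Real.one_rpow, Real.zero_rpow (by positivity)]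
  rw [smul_eq_mul, sub_zero, mul_one_div]

lemma myident (f f' : ℝ → ℝ) (a b : ℝ) (hab : a < b)
    (hdiff : ∀ x ∈ Set.uIcc a b, HasDerivAt f (f' x) x)
    (hint : IntervalIntegrable f' volume a b) :
    (f a + f b) / 2 - (1 / (b - a)) * ∫ x in a..b, f x =
      (1 / (b - a)) * ∫ x in a..b, (x - (a + b) / 2) * f' x := by
  have hba : (0:ℝ) < b - a := by linarith
  have hu : ∀ x ∈ Set.uIcc a b, HasDerivAt (fun y => y - (a + b) / 2) 1 x := by
    intro x _
    simpa using (hasDerivAt_id x).sub_const ((a + b) / 2)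
  have hv' : IntervalIntegrable (fun _ : ℝ => (1:ℝ)) volume a b :=
    intervalIntegrable_const
  have h := intervalIntegral.integral_mul_deriv_eq_deriv_mul hu hdiff hv' hint
  rw [h]
  have : ∫ x in a..b, 1 * f x = ∫ x in a..b, f x := by simp
  rw [this]
  field_simp
  ring

lemma myabsint (a b p : ℝ) (hab : a < b) (hp : 0 < p) :
    ∫ x in a..b, |x - (a + b) / 2| ^ p = 2 * ((b - a) / 2) ^ (p + 1) / (p + 1) := by
  set c := (a + b) / 2 with hc
  have hac : a < c := by rw [hc]; linarith
  have hcb : c < b := by rw [hc]; linarith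
  have hcont : ContinuousOn (fun x : ℝ => |x - c| ^ p) (Set.uIcc a b) := by
    apply ContinuousOn.rpow_const (by fun_prop)
    intro x _; exact Or.inr hp.le
  have hsplit : ∫ x in a..b, |x - c| ^ p =
      (∫ x in a..c, |x - c| ^ p) + ∫ x in c..b, |x - c| ^ p := by
    rw [intervalIntegral.integral_add_adjacent_intervals]
    · exact (hcont.mono (by apply Set.uIcc_subset_uIcc_left; simp [Set.mem_uIcc]; left; exact ⟨hac.le, hcb.le⟩)).intervalIntegrable
    · exact (hcont.mono (by apply Set.uIcc_subset_uIcc_right; simp [Set.mem_uIcc]; left; exact ⟨hac.le, hcb.le⟩)).intervalIntegrable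
  have h1 : ∫ x in a..c, |x - c| ^ p = ((b - a) / 2) ^ (p + 1) / (p + 1) := by
    have hcongr : ∫ x in a..c, |x - c| ^ p = ∫ x in a..c, (c - x) ^ p := by
      apply intervalIntegral.integral_congr
      intro x hx
      rw [Set.uIcc_of_le hac.le] at hx
      show |x - c| ^ p = (c - x) ^ p
      rw [abs_sub_comm, abs_of_nonneg (by linarith [hx.2])]
    rw [hcongr]
    have h := intervalIntegral.integral_comp_sub_left (a := a) (b := c) (fun y => y ^ p) c
    simp only [sub_self] at h
    rw [h, integral_rpow (Or.inl (by linarith))]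
    rw [Real.zero_rpow (by positivity)]
    have : c - a = (b - a) / 2 := by rw [hc]; ring
    rw [this]; ring
  have h2 : ∫ x in c..b, |x - c| ^ p = ((b - a) / 2) ^ (p + 1) / (p + 1) := by
    have hcongr : ∫ x in c..b, |x - c| ^ p = ∫ x in c..b, (x - c) ^ p := by
      apply intervalIntegral.integral_congr
      intro x hx
      rw [Set.uIcc_of_le hcb.le] at hx
      show |x - c| ^ p = (x - c) ^ p
      rw [abs_of_nonneg (by linarith [hx.1])]
    rw [hcongr]
    rw [intervalIntegral.integral_comp_sub_right (fun y => y ^ p) c]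
    simp only [sub_self]
    rw [integral_rpow (Or.inl (by linarith))]
    rw [Real.zero_rpow (by positivity)]
    have : b - c = (b - a) / 2 := by rw [hc]; ring
    rw [this]; ring
  rw [hsplit, h1, h2]; ring

lemma mynum (p q D K : ℝ) (hp : 1 < p) (hq : q = p / (p - 1)) (hD : 0 < D) (hK : 0 ≤ K) :
    (1 / D) * ((2 * (D / 2) ^ (p + 1) / (p + 1)) ^ (1 / p) * (D * K) ^ (1 / q)) ≤
      D * (2 / ((p + 1) * (p + 2))) ^ (1 / p) * K ^ (1 / q) := by
  have hp0 : (0:ℝ) < p := by linarith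
  have hq0 : (0:ℝ) < q := by
    have h1 : (0:ℝ) < p - 1 := by linarith
    rw [hq]; positivity
  have hpq : 1 / p + 1 / q = 1 := by rw [hq]; field_simp; ring
  have h2p : (0:ℝ) < (2:ℝ) ^ p := rpow_pos_of_pos two_pos p
  have e1 : 2 * (D / 2) ^ (p + 1) / (p + 1) = D ^ (p + 1) * (1 / ((2:ℝ) ^ p * (p + 1))) := by
    rw [div_rpow hD.le (by norm_num : (0:ℝ) ≤ 2), rpow_add two_pos, rpow_one]
    field_simp
  have e2 : (2 * (D / 2) ^ (p + 1) / (p + 1)) ^ (1 / p) =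
      D ^ ((p + 1) * (1 / p)) * (1 / ((2:ℝ) ^ p * (p + 1))) ^ (1 / p) := by
    rw [e1, mul_rpow (by positivity) (by positivity), ← rpow_mul hD.le]
  have e3 : (D * K) ^ (1 / q) = D ^ (1 / q) * K ^ (1 / q) :=
    mul_rpow hD.le hK
  have e4 : D ^ ((p + 1) * (1 / p)) * D ^ (1 / q) = D * D := by
    rw [← rpow_add hD]
    have h5 : (p + 1) * (1 / p) + 1 / q = 2 := by
      have : (p + 1) * (1 / p) = 1 + 1 / p := by field_simp
      rw [this]; linarith
    rw [h5, show (2:ℝ) = ((2:ℕ):ℝ) by norm_num, rpow_natCast]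
    ring
  have hcoef : (1 / ((2:ℝ) ^ p * (p + 1))) ^ (1 / p) ≤ (2 / ((p + 1) * (p + 2))) ^ (1 / p) := by
    apply rpow_le_rpow (by positivity) _ (by positivity)
    rw [div_le_div_iff₀ (by positivity) (by positivity)]
    have hbern : 1 + p ≤ (2:ℝ) ^ p := by
      have := one_add_mul_self_le_rpow_one_add (by norm_num : (-1:ℝ) ≤ 1) hp.le
      norm_num at this; linarith
    nlinarith
  calc (1 / D) * ((2 * (D / 2) ^ (p + 1) / (p + 1)) ^ (1 / p) * (D * K) ^ (1 / q))
      = D * ((1 / ((2:ℝ) ^ p * (p + 1))) ^ (1 / p) * K ^ (1 / q)) := by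
        rw [e2, e3]
        have : (1:ℝ) / D * (D ^ ((p + 1) * (1 / p)) * (1 / ((2:ℝ) ^ p * (p + 1))) ^ (1 / p) *
            (D ^ (1 / q) * K ^ (1 / q))) =
            (1 / D) * (D ^ ((p + 1) * (1 / p)) * D ^ (1 / q)) *
              ((1 / ((2:ℝ) ^ p * (p + 1))) ^ (1 / p) * K ^ (1 / q)) := by ring
        rw [this, e4]
        field_simp
    _ ≤ D * ((2 / ((p + 1) * (p + 2))) ^ (1 / p) * K ^ (1 / q)) := by
        apply mul_le_mul_of_nonneg_left _ hD.le
        exact mul_le_mul_of_nonneg_right hcoef (by positivity)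
    _ = D * (2 / ((p + 1) * (p + 2))) ^ (1 / p) * K ^ (1 / q) := by ring

end Aux

open intervalIntegral Real in
/-- Theorem 5: Hölder-type double-integral Hermite–Hadamard estimate for `|f'|^q`
being `s`-`(α,m)`-convex (first sense), `p > 1`, `q = p/(p-1)`. -/
theorem hh_s_alpha_m_convex_holder_double (f f' : ℝ → ℝ) (a b α m s p q c d : ℝ)
    (ha : 0 ≤ a) (hab : a < b)
    (hα : α ∈ Set.Icc (0:ℝ) 1) (hm : m ∈ Set.Ioc (0:ℝ) 1) (hs : s ∈ Set.Ioc (0:ℝ) 1)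
    (hp : 1 < p) (hq : q = p / (p - 1))
    (hc : c < a) (hd : b / m < d)
    (hdiff : ∀ x ∈ Set.Ioo c d, HasDerivAt f (f' x) x)
    (hint : IntervalIntegrable f' volume a b)
    (hconv : ∀ x ∈ Set.Icc a b, ∀ y ∈ Set.Icc a b, ∀ t ∈ Set.Icc (0:ℝ) 1,
      |f' (t * x + (1 - t) * y)| ^ q ≤
        t ^ (α * s) * |f' x| ^ q + m * (1 - t ^ (α * s)) * |f' (y / m)| ^ q) :
    |(f a + f b) / 2 - (1 / (b - a)) * ∫ x in a..b, f x| ≤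
      (b - a) * (2 / ((p + 1) * (p + 2))) ^ (1 / p) *
        ((|f' a| ^ q + m * (α * s) * |f' (b / m)| ^ q) / (α * s + 1)) ^ (1 / q) := by
  have hba : (0:ℝ) < b - a := by linarith
  have hm0 : 0 < m := hm.1
  have hb0 : 0 < b := lt_of_le_of_lt ha hab
  have hbm : b ≤ b / m := by
    rw [le_div_iff₀ hm0]; nlinarith [hm.2]
  have hsub : Set.uIcc a b ⊆ Set.Ioo c d := by
    rw [Set.uIcc_of_le hab.le]
    exact fun x hx => ⟨lt_of_lt_of_le hc hx.1, lt_of_le_of_lt (hx.2.trans hbm) hd⟩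
  set r := α * s with hrdef
  have hr : 0 ≤ r := mul_nonneg hα.1 hs.1.le
  have hr1 : (0:ℝ) < r + 1 := by linarith
  set A := |f' a| ^ q with hA
  set B := |f' (b / m)| ^ q with hB
  have hA0 : 0 ≤ A := rpow_nonneg (abs_nonneg _) q
  have hB0 : 0 ≤ B := rpow_nonneg (abs_nonneg _) q
  set K := (A + m * r * B) / (r + 1) with hK
  have hK0 : 0 ≤ K := by positivity
  have hp0 : (0:ℝ) < p := by linarith
  have hq0 : (0:ℝ) < q := by
    have : (0:ℝ) < p - 1 := by linarith
    rw [hq]; positivity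
  have hpq : p.HolderConjugate q := hq ▸ Real.HolderConjugate.conjExponent hp
  -- pointwise convexity bound
  have hpt : ∀ x ∈ Set.Icc a b,
      |f' x| ^ q ≤ ((b - x) / (b - a)) ^ r * A + m * (1 - ((b - x) / (b - a)) ^ r) * B := by
    intro x hx
    set t := (b - x) / (b - a) with ht
    have ht01 : t ∈ Set.Icc (0:ℝ) 1 := by
      constructor
      · apply div_nonneg (by linarith [hx.2]) hba.le
      · rw [div_le_one hba]; linarith [hx.1]
    have harg : t * a + (1 - t) * b = x := by
      have h' : t * (b - a) = b - x := by rw [ht, div_mul_cancel₀ _ hba.ne']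
      linear_combination -h'
    have := hconv a ⟨le_refl a, hab.le⟩ b ⟨hab.le, le_refl b⟩ t ht01
    rw [harg] at this
    exact this
  -- crude bound
  have hcrude : ∀ x ∈ Set.Icc a b, |f' x| ^ q ≤ A + m * B := by
    intro x hx
    refine (hpt x hx).trans ?_
    set t := (b - x) / (b - a)
    have ht0 : 0 ≤ t := div_nonneg (by linarith [hx.2]) hba.le
    have ht1 : t ≤ 1 := by rw [div_le_one hba]; linarith [hx.1]
    have h1 : t ^ r ≤ 1 := rpow_le_one ht0 ht1 hr
    have h0 : 0 ≤ t ^ r := rpow_nonneg ht0 r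
    nlinarith [mul_nonneg (sub_nonneg.2 h1) hA0, mul_nonneg (mul_nonneg hm0.le h0) hB0,
      mul_nonneg (mul_nonneg hm0.le (sub_nonneg.2 h1)) hB0, mul_nonneg h0 hA0]
  set μ := volume.restrict (Set.Ioc a b) with hμ
  have hfin : IsFiniteMeasure μ := by
    constructor
    rw [hμ, Measure.restrict_apply_univ]
    exact measure_Ioc_lt_top
  have hf'm : AEStronglyMeasurable f' μ := hint.1.aestronglyMeasurable
  have habs : AEStronglyMeasurable (fun x => |f' x|) μ := by
    simpa [Real.norm_eq_abs] using hf'm.norm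
  have hqm : AEStronglyMeasurable (fun x => |f' x| ^ q) μ := by
    exact (Real.continuous_rpow_const hq0.le).comp_aestronglyMeasurable habs
  -- Memℒp facts
  have hg1 : MemLp (fun x : ℝ => |x - (a + b) / 2|) (ENNReal.ofReal p) μ := by
    have hcont : Continuous fun x : ℝ => |x - (a + b) / 2| := by continuity
    apply MemLp.of_bound hcont.aestronglyMeasurable (b - a)
    rw [hμ, ae_restrict_iff' measurableSet_Ioc]
    filter_upwards with x hx
    rw [Real.norm_eq_abs, abs_abs, abs_sub_le_iff]
    constructor <;> [linarith [hx.2]; linarith [hx.1.le]]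
  have hg2 : MemLp (fun x : ℝ => |f' x|) (ENNReal.ofReal q) μ := by
    apply MemLp.of_bound habs ((A + m * B) ^ (1 / q))
    rw [hμ, ae_restrict_iff' measurableSet_Ioc]
    filter_upwards with x hx
    rw [Real.norm_eq_abs, abs_abs]
    have := hcrude x ⟨hx.1.le, hx.2⟩
    calc |f' x| = (|f' x| ^ q) ^ (1 / q) := by
          rw [← Real.rpow_mul (abs_nonneg _), mul_one_div, div_self hq0.ne', Real.rpow_one]
      _ ≤ (A + m * B) ^ (1 / q) := rpow_le_rpow (rpow_nonneg (abs_nonneg _) q) this (by positivity)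
  -- identity
  have hid : (f a + f b) / 2 - (1 / (b - a)) * ∫ x in a..b, f x =
      (1 / (b - a)) * ∫ x in a..b, (x - (a + b) / 2) * f' x :=
    myident f f' a b hab (fun x hx => (hdiff x (hsub hx))) hint
  -- Hölder
  have hholder := MeasureTheory.integral_mul_le_Lp_mul_Lq_of_nonneg hpq
    (Filter.Eventually.of_forall fun x => abs_nonneg _) (Filter.Eventually.of_forall fun x => abs_nonneg _)
    hg1 hg2
  -- value of the first integral
  have hI1 : ∫ x, |x - (a + b) / 2| ^ p ∂μ = 2 * ((b - a) / 2) ^ (p + 1) / (p + 1) := by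
    rw [hμ, ← intervalIntegral.integral_of_le hab.le]
    exact myabsint a b p hab hp0
  -- bound for second integral
  have hint2 : Integrable (fun x => |f' x| ^ q) μ := by
    apply Integrable.mono' (integrable_const (A + m * B)) hqm
    rw [hμ, ae_restrict_iff' measurableSet_Ioc]
    filter_upwards with x hx
    rw [Real.norm_eq_abs, abs_of_nonneg (rpow_nonneg (abs_nonneg _) _)]
    exact hcrude x ⟨hx.1.le, hx.2⟩
  have hφrc : Continuous fun x : ℝ => ((b - x) / (b - a)) ^ r :=
    (Real.continuous_rpow_const hr).comp (by fun_prop)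
  have hφc : Continuous fun x : ℝ =>
      ((b - x) / (b - a)) ^ r * A + m * (1 - ((b - x) / (b - a)) ^ r) * B :=
    (hφrc.mul continuous_const).add
      ((continuous_const.mul (continuous_const.sub hφrc)).mul continuous_const)
  have hφval : ∫ x, (((b - x) / (b - a)) ^ r * A + m * (1 - ((b - x) / (b - a)) ^ r) * B) ∂μ =
      (b - a) * K := by
    rw [hμ, ← intervalIntegral.integral_of_le hab.le]
    have hcongr : ∫ x in a..b,
        (((b - x) / (b - a)) ^ r * A + m * (1 - ((b - x) / (b - a)) ^ r) * B) =
        ∫ x in a..b, ((A - m * B) * ((b - x) / (b - a)) ^ r + m * B) := by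
      apply intervalIntegral.integral_congr
      intro x _
      show ((b - x) / (b - a)) ^ r * A + m * (1 - ((b - x) / (b - a)) ^ r) * B =
        (A - m * B) * ((b - x) / (b - a)) ^ r + m * B
      ring
    rw [hcongr, intervalIntegral.integral_add (f := fun x => (A - m * B) * ((b - x) / (b - a)) ^ r) (g := fun _ => m * B)
      (((continuous_const.mul hφrc).continuousOn).intervalIntegrable)
      intervalIntegrable_const]
    rw [intervalIntegral.integral_const_mul, myintc a b r hab hr,
      intervalIntegral.integral_const]
    rw [hK]
    have : b - a > 0 := hba
    field_simp
    ring
  have hI2 : ∫ x, |f' x| ^ q ∂μ ≤ (b - a) * K := by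
    rw [← hφval, hμ]
    apply setIntegral_mono_on (by rw [hμ] at hint2; exact hint2)
      (hφc.integrableOn_Ioc) measurableSet_Ioc
    intro x hx
    exact hpt x ⟨hx.1.le, hx.2⟩
  have hI2nn : 0 ≤ ∫ x, |f' x| ^ q ∂μ :=
    integral_nonneg fun x => rpow_nonneg (abs_nonneg _) q
  -- chain of inequalities
  rw [hid, abs_mul, abs_of_pos (by positivity : (0:ℝ) < 1 / (b - a))]
  have step1 : |∫ x in a..b, (x - (a + b) / 2) * f' x| ≤
      ∫ x, |x - (a + b) / 2| * |f' x| ∂μ := by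
    refine (intervalIntegral.abs_integral_le_integral_abs hab.le).trans_eq ?_
    rw [intervalIntegral.integral_of_le hab.le, hμ]
    apply MeasureTheory.integral_congr_ae
    filter_upwards with x
    rw [abs_mul]
  have step2 : (∫ x, |x - (a + b) / 2| ^ p ∂μ) ^ (1 / p) * (∫ x, |f' x| ^ q ∂μ) ^ (1 / q) ≤
      (2 * ((b - a) / 2) ^ (p + 1) / (p + 1)) ^ (1 / p) * ((b - a) * K) ^ (1 / q) := by
    rw [hI1]
    apply mul_le_mul_of_nonneg_left _ (by positivity)
    exact rpow_le_rpow hI2nn hI2 (by positivity)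
  calc (1 / (b - a)) * |∫ x in a..b, (x - (a + b) / 2) * f' x|
      ≤ (1 / (b - a)) * ((2 * ((b - a) / 2) ^ (p + 1) / (p + 1)) ^ (1 / p) *
          ((b - a) * K) ^ (1 / q)) := by
        apply mul_le_mul_of_nonneg_left _ (by positivity)
        exact (step1.trans hholder).trans step2
    _ ≤ (b - a) * (2 / ((p + 1) * (p + 2))) ^ (1 / p) * K ^ (1 / q) :=
        mynum p q (b - a) K hp hq hba hK0
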